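/- Let K be a field of characteristic not 2 and c ∈ K \ {0, ±1, ±1±√2, ±√−1}. Set λ = ((c−1/c)/2)² and let E: y² = (x+λ²)(x+1)x. Then the point R = ((1−c)³(c+1)/(4c), −(c²−1/c²)((c−2)²−1/c²)c/16) lies on E(K) and has order 8; moreover E(K) contains a subgroup isomorphic to ℤ/8ℤ ⊕ ℤ/2ℤ. -/

import Mathlib

/-- The elliptic curve `y² = (x − α₁)(x − α₂)(x − α₃)` as an affine Weierstrass curve. -/
def cubicCurve {K : Type*} [Field K] (α₁ α₂ α₃ : K) : WeierstrassCurve.Affine K :=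
  { a₁ := 0, a₂ := -(α₁ + α₂ + α₃), a₃ := 0,
    a₄ := α₁ * α₂ + α₂ * α₃ + α₃ * α₁, a₆ := -(α₁ * α₂ * α₃) }

/-- `c` avoids the exceptional set `{0, ±1, ±1±√2, ±√−1}`: equivalently `c ≠ 0`, `c ≠ ±1`,
`((c−1/c)/2)² ≠ 1` and `((c−1/c)/2)² ≠ −1`. -/
def GoodParam {K : Type*} [Field K] (c : K) : Prop :=
  c ≠ 0 ∧ c ≠ 1 ∧ c ≠ -1 ∧ ((c - 1 / c) / 2) ^ 2 ≠ 1 ∧ ((c - 1 / c) / 2) ^ 2 ≠ -1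

private lemma some_eq_some' {K : Type*} [Field K] {W : WeierstrassCurve.Affine K}
    {x₁ y₁ x₂ y₂ : K} {h₁ : W.Nonsingular x₁ y₁} (h₂ : W.Nonsingular x₂ y₂)
    (hx : x₁ = x₂) (hy : y₁ = y₂) :
    WeierstrassCurve.Affine.Point.some _ _ h₁ = WeierstrassCurve.Affine.Point.some _ _ h₂ := by
  subst hx; subst hy; rfl

private lemma nat_dvd_aux (n : ℕ) (h1 : n ∣ 8) (h2 : ¬ n ∣ 4) : n = 8 := by
  have h := Nat.le_of_dvd (by norm_num) h1
  interval_cases n <;> revert h1 h2 <;> decide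

private lemma subgroup_embed {M : Type*} [AddCommGroup M] (P T : M)
    (hP : addOrderOf P = 8) (hT : (2 : ℕ) • T = 0) (hT0 : T ≠ 0) (hPT : (4 : ℕ) • P ≠ T) :
    ∃ φ : (ZMod 8 × ZMod 2) →+ M, Function.Injective φ := by
  have h8 : (zmultiplesHom M P) ((8 : ℕ) : ℤ) = 0 := by
    show ((8 : ℕ) : ℤ) • P = 0
    rw [natCast_zsmul]
    exact addOrderOf_dvd_iff_nsmul_eq_zero.mp (by rw [hP])
  have h2' : (zmultiplesHom M T) ((2 : ℕ) : ℤ) = 0 := by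
    show ((2 : ℕ) : ℤ) • T = 0
    rw [natCast_zsmul]; exact hT
  refine ⟨((ZMod.lift 8 ⟨zmultiplesHom M P, h8⟩).comp (AddMonoidHom.fst _ _)) +
    ((ZMod.lift 2 ⟨zmultiplesHom M T, h2'⟩).comp (AddMonoidHom.snd _ _)), ?_⟩
  rw [injective_iff_map_eq_zero]
  rintro ⟨a, b⟩ hab
  simp only [AddMonoidHom.add_apply, AddMonoidHom.comp_apply, AddMonoidHom.coe_fst,
    AddMonoidHom.coe_snd] at hab
  have ea : (ZMod.lift 8 ⟨zmultiplesHom M P, h8⟩) a = a.val • P := by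
    have e0 : (((a.val : ℕ) : ℤ) : ZMod 8) = a := by
      rw [Int.cast_natCast]; exact ZMod.natCast_rightInverse a
    conv_lhs => rw [← e0]
    rw [ZMod.lift_coe]
    show ((a.val : ℕ) : ℤ) • P = a.val • P
    rw [natCast_zsmul]
  have eb : (ZMod.lift 2 ⟨zmultiplesHom M T, h2'⟩) b = b.val • T := by
    have e0 : (((b.val : ℕ) : ℤ) : ZMod 2) = b := by
      rw [Int.cast_natCast]; exact ZMod.natCast_rightInverse b
    conv_lhs => rw [← e0]
    rw [ZMod.lift_coe]
    show ((b.val : ℕ) : ℤ) • T = b.val • T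
    rw [natCast_zsmul]
  rw [ea, eb] at hab
  have hbv : b.val = 0 ∨ b.val = 1 := by have := ZMod.val_lt b; omega
  rcases hbv with hb0 | hb1
  · rw [hb0, zero_nsmul, add_zero] at hab
    have hd := addOrderOf_dvd_of_nsmul_eq_zero hab
    rw [hP] at hd
    have hav : a.val < 8 := ZMod.val_lt a
    have ha0 : a.val = 0 := by omega
    have ha : a = 0 := (ZMod.val_eq_zero a).mp ha0
    have hb : b = 0 := (ZMod.val_eq_zero b).mp hb0
    rw [ha, hb]; rfl
  · rw [hb1, one_nsmul] at hab
    have hd : (2 * a.val) • P = 0 := by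
      rw [mul_smul]
      have h' : a.val • P = -T := eq_neg_of_add_eq_zero_left hab
      rw [h', smul_neg, hT, neg_zero]
    have hdvd := addOrderOf_dvd_of_nsmul_eq_zero hd
    rw [hP] at hdvd
    have hav : a.val < 8 := ZMod.val_lt a
    have : a.val = 0 ∨ a.val = 4 := by omega
    rcases this with h0' | h4'
    · rw [h0', zero_nsmul, zero_add] at hab
      exact absurd hab hT0
    · rw [h4'] at hab
      refine absurd ?_ hPT
      have hnT : -T = T := by
        rw [two_nsmul] at hT
        exact neg_eq_of_add_eq_zero_left hT
      calc (4 : ℕ) • P = -T := eq_neg_of_add_eq_zero_left hab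
        _ = T := hnT

set_option maxHeartbeats 1600000 in
open WeierstrassCurve.Affine WeierstrassCurve.Affine.Point in
open Classical in
private lemma order_eight_point_aux {K : Type*} [Field K] (h2 : (2 : K) ≠ 0)
    (c : K) (hc : GoodParam c) :
    ∃ hR : (cubicCurve (-((((c - 1 / c) / 2) ^ 2) ^ 2)) (-1) 0).Nonsingular
        ((1 - c) ^ 3 * (c + 1) / (4 * c))
        (-((c ^ 2 - 1 / c ^ 2) * ((c - 2) ^ 2 - 1 / c ^ 2) * c / 16)),
      addOrderOf (WeierstrassCurve.Affine.Point.some _ _ hR) = 8 ∧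
      ∃ φ : (ZMod 8 × ZMod 2) →+ (cubicCurve (-((((c - 1 / c) / 2) ^ 2) ^ 2)) (-1) 0).Point,
        Function.Injective φ := by
  obtain ⟨hc0, hc1, hcm1, hl1, hlm1⟩ := hc
  have h4 : (4 : K) ≠ 0 := by
    have e : (4 : K) = 2 ^ 2 := by norm_num
    rw [e]; exact pow_ne_zero 2 h2
  have h16 : (16 : K) ≠ 0 := by
    have e : (16 : K) = 2 ^ 4 := by norm_num
    rw [e]; exact pow_ne_zero 4 h2
  set l : K := ((c - 1 / c) / 2) ^ 2 with hldef
  set W : WeierstrassCurve.Affine K := cubicCurve (-(l ^ 2)) (-1) 0 with hWdef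
  have Wa1 : W.a₁ = 0 := by rw [hWdef]; rfl
  have Wa3 : W.a₃ = 0 := by rw [hWdef]; rfl
  have Wa2 : W.a₂ = l ^ 2 + 1 := by
    rw [hWdef]; show -(-(l ^ 2) + -1 + 0) = l ^ 2 + 1; ring
  have Wa4 : W.a₄ = l ^ 2 := by
    rw [hWdef]; show -(l ^ 2) * -1 + -1 * 0 + 0 * -(l ^ 2) = l ^ 2; ring
  have Wa6 : W.a₆ = 0 := by
    rw [hWdef]; show -(-(l ^ 2) * -1 * 0) = 0; ring
  -- basic nonvanishing facts
  have hcc : c - 1 / c ≠ 0 := by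
    intro h
    have e1 : (1 / c) * c = 1 := by field_simp
    have h' : (c - 1) * (c + 1) = 0 := by linear_combination c * h + e1
    rcases mul_eq_zero.mp h' with h'' | h''
    · exact hc1 (sub_eq_zero.mp h'')
    · exact hcm1 (eq_neg_of_add_eq_zero_left h'')
  have hl0 : l ≠ 0 := by
    rw [hldef]; exact pow_ne_zero 2 (div_ne_zero hcc h2)
  have hlp1 : l + 1 ≠ 0 := fun h => hlm1 (eq_neg_of_add_eq_zero_left h)
  have hcp : c + 1 / c ≠ 0 := by
    intro h
    apply hlm1
    have e1 : (1 / c) * c = 1 := by field_simp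
    have hc2 : c ^ 2 = -1 := by linear_combination c * h - e1
    have h1c : 1 / c = -c := by linear_combination h
    calc l = ((c - -c) / 2) ^ 2 := by rw [hldef, h1c]
      _ = (c - -c) ^ 2 / 2 ^ 2 := by rw [div_pow]
      _ = c ^ 2 := by rw [div_eq_iff (pow_ne_zero 2 h2)]; ring
      _ = -1 := hc2
  have hA : c - 2 - 1 / c ≠ 0 := by
    intro h
    apply hl1
    have e : c - 1 / c = 2 := by linear_combination h
    rw [hldef, e, div_self h2, one_pow]
  have hB : c - 2 + 1 / c ≠ 0 := by
    intro h
    apply hc1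
    have e1 : (1 / c) * c = 1 := by field_simp
    have h' : (c - 1) ^ 2 = 0 := by linear_combination c * h - e1
    exact sub_eq_zero.mp (pow_eq_zero_iff (two_ne_zero) |>.mp h')
  set xR : K := (1 - c) ^ 3 * (c + 1) / (4 * c) with hxRd
  set yR : K := -((c ^ 2 - 1 / c ^ 2) * ((c - 2) ^ 2 - 1 / c ^ 2) * c / 16) with hyRd
  clear_value l W xR yR
  have hyR0 : yR ≠ 0 := by
    have factored : yR =
        -(((c - 1 / c) * (c + 1 / c)) * ((c - 2 - 1 / c) * (c - 2 + 1 / c)) * c / 16) := by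
      rw [hyRd]; ring
    rw [factored]
    exact neg_ne_zero.mpr (div_ne_zero
      (mul_ne_zero (mul_ne_zero (mul_ne_zero hcc hcp) (mul_ne_zero hA hB)) hc0) h16)
  -- nonsingularity of the four relevant points
  have hR : W.Nonsingular xR yR := by
    rw [nonsingular_iff, equation_iff, Wa1, Wa2, Wa3, Wa4, Wa6]
    constructor
    · rw [hxRd, hyRd, hldef]; field_simp
      first
        | ring1
        | (rw [div_eq_div_iff (by apply_rules [mul_ne_zero, pow_ne_zero, hc0, h2, h4, h16])
            (by apply_rules [mul_ne_zero, pow_ne_zero, hc0, h2, h4, h16])]; ring1)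
        | (rw [eq_div_iff (by apply_rules [mul_ne_zero, pow_ne_zero, hc0, h2, h4, h16])]; ring1)
        | (rw [div_eq_iff (by apply_rules [mul_ne_zero, pow_ne_zero, hc0, h2, h4, h16])]; ring1)
    · right
      intro h
      apply hyR0
      have h0 : 2 * yR = 0 := by linear_combination h
      exact (mul_eq_zero.mp h0).resolve_left h2
  have hyQ0 : l * (l + 1) ≠ 0 := mul_ne_zero hl0 hlp1
  have hQpt : W.Nonsingular l (l * (l + 1)) := by
    rw [nonsingular_iff, equation_iff, Wa1, Wa2, Wa3, Wa4, Wa6]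
    refine ⟨by ring, Or.inr fun h => ?_⟩
    apply hyQ0
    have h0 : 2 * (l * (l + 1)) = 0 := by linear_combination h
    exact (mul_eq_zero.mp h0).resolve_left h2
  have hP0 : W.Nonsingular 0 0 := by
    rw [nonsingular_iff, equation_iff, Wa1, Wa2, Wa3, Wa4, Wa6]
    refine ⟨by ring, Or.inl fun h => ?_⟩
    apply hl0
    have h' : l ^ 2 = 0 := by linear_combination -h
    exact pow_eq_zero_iff (two_ne_zero) |>.mp h'
  have hTpt : W.Nonsingular (-1) 0 := by
    rw [nonsingular_iff, equation_iff, Wa1, Wa2, Wa3, Wa4, Wa6]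
    refine ⟨by ring, Or.inl fun h => ?_⟩
    have h' : (l - 1) * (l + 1) = 0 := by linear_combination h
    rcases mul_eq_zero.mp h' with h'' | h''
    · exact hl1 (sub_eq_zero.mp h'')
    · exact hlm1 (eq_neg_of_add_eq_zero_left h'')
  -- negation facts
  have hnegYR : W.negY xR yR = -yR := by rw [negY, Wa1, Wa3]; ring
  have hyRne : yR ≠ W.negY xR yR := by
    rw [hnegYR]
    intro h
    apply hyR0
    have h0 : 2 * yR = 0 := by linear_combination h
    exact (mul_eq_zero.mp h0).resolve_left h2
  have hnegYQ : W.negY l (l * (l + 1)) = -(l * (l + 1)) := by rw [negY, Wa1, Wa3]; ring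
  have hyQne : l * (l + 1) ≠ W.negY l (l * (l + 1)) := by
    rw [hnegYQ]
    intro h
    apply hyQ0
    have h0 : 2 * (l * (l + 1)) = 0 := by linear_combination h
    exact (mul_eq_zero.mp h0).resolve_left h2
  -- the first doubling: slope
  have hden1 : yR - -yR ≠ 0 := by
    intro h
    apply hyR0
    have h0 : 2 * yR = 0 := by linear_combination h
    exact (mul_eq_zero.mp h0).resolve_left h2
  have h4c2 : 4 * c ^ 2 ≠ 0 := mul_ne_zero h4 (pow_ne_zero 2 hc0)
  have hs1 : W.slope xR xR yR yR = (c ^ 4 - 4 * c ^ 3 - 1) / (4 * c ^ 2) := by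
    rw [slope_of_Y_ne rfl hyRne, hnegYR, Wa1, Wa2, Wa4]
    rw [div_eq_div_iff hden1 h4c2]
    rw [hxRd, hyRd, hldef]; field_simp
    first
      | ring1
      | (rw [div_eq_div_iff (by apply_rules [mul_ne_zero, pow_ne_zero, hc0, h2, h4, h16])
          (by apply_rules [mul_ne_zero, pow_ne_zero, hc0, h2, h4, h16])]; ring1)
      | (rw [eq_div_iff (by apply_rules [mul_ne_zero, pow_ne_zero, hc0, h2, h4, h16])]; ring1)
      | (rw [div_eq_iff (by apply_rules [mul_ne_zero, pow_ne_zero, hc0, h2, h4, h16])]; ring1)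
  have hx2 : W.addX xR xR (W.slope xR xR yR yR) = l := by
    rw [hs1]
    simp only [WeierstrassCurve.Affine.addX]
    rw [Wa1, Wa2]
    rw [hxRd, hldef]; field_simp
    first
      | ring1
      | (rw [div_eq_div_iff (by apply_rules [mul_ne_zero, pow_ne_zero, hc0, h2, h4, h16])
          (by apply_rules [mul_ne_zero, pow_ne_zero, hc0, h2, h4, h16])]; ring1)
      | (rw [eq_div_iff (by apply_rules [mul_ne_zero, pow_ne_zero, hc0, h2, h4, h16])]; ring1)
      | (rw [div_eq_iff (by apply_rules [mul_ne_zero, pow_ne_zero, hc0, h2, h4, h16])]; ring1)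
  have hy2 : W.addY xR xR yR (W.slope xR xR yR yR) = l * (l + 1) := by
    simp only [WeierstrassCurve.Affine.addY, WeierstrassCurve.Affine.negAddY,
      WeierstrassCurve.Affine.negY]
    rw [hx2, hs1, Wa1, Wa3]
    rw [hxRd, hyRd, hldef]; field_simp
    first
      | ring1
      | (rw [div_eq_div_iff (by apply_rules [mul_ne_zero, pow_ne_zero, hc0, h2, h4, h16])
          (by apply_rules [mul_ne_zero, pow_ne_zero, hc0, h2, h4, h16])]; ring1)
      | (rw [eq_div_iff (by apply_rules [mul_ne_zero, pow_ne_zero, hc0, h2, h4, h16])]; ring1)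
      | (rw [div_eq_iff (by apply_rules [mul_ne_zero, pow_ne_zero, hc0, h2, h4, h16])]; ring1)
  have hRR : Point.some _ _ hR + Point.some _ _ hR = Point.some _ _ hQpt := by
    rw [Point.add_self_of_Y_ne hyRne]
    exact some_eq_some' hQpt hx2 hy2
  -- the second doubling
  have hs2 : W.slope l l (l * (l + 1)) (l * (l + 1)) = l + 1 := by
    rw [slope_of_Y_ne rfl hyQne, hnegYQ, Wa1, Wa2, Wa4]
    have hd : l * (l + 1) - -(l * (l + 1)) ≠ 0 := by
      have e : l * (l + 1) - -(l * (l + 1)) = 2 * (l * (l + 1)) := by ring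
      rw [e]; exact mul_ne_zero h2 hyQ0
    rw [div_eq_iff hd]; ring
  have hx4 : W.addX l l (W.slope l l (l * (l + 1)) (l * (l + 1))) = 0 := by
    rw [hs2]
    simp only [WeierstrassCurve.Affine.addX]
    rw [Wa1, Wa2]; ring
  have hy4 : W.addY l l (l * (l + 1)) (W.slope l l (l * (l + 1)) (l * (l + 1))) = 0 := by
    simp only [WeierstrassCurve.Affine.addY, WeierstrassCurve.Affine.negAddY,
      WeierstrassCurve.Affine.negY]
    rw [hx4, hs2, Wa1, Wa3]; ring
  have hQQ : Point.some _ _ hQpt + Point.some _ _ hQpt = Point.some _ _ hP0 := by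
    rw [Point.add_self_of_Y_ne hyQne]
    exact some_eq_some' hP0 hx4 hy4
  have hPP : Point.some _ _ hP0 + Point.some _ _ hP0 = (0 : W.Point) :=
    Point.add_self_of_Y_eq (by rw [negY, Wa1, Wa3]; ring)
  have hTT : Point.some _ _ hTpt + Point.some _ _ hTpt = (0 : W.Point) :=
    Point.add_self_of_Y_eq (by rw [negY, Wa1, Wa3]; ring)
  -- multiples of R
  have h2R : (2 : ℕ) • Point.some _ _ hR = Point.some _ _ hQpt := by rw [two_nsmul]; exact hRR
  have h4R : (4 : ℕ) • Point.some _ _ hR = Point.some _ _ hP0 := by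
    have e : (4 : ℕ) • Point.some _ _ hR = (2 : ℕ) • ((2 : ℕ) • Point.some _ _ hR) := by
      rw [smul_smul]; norm_num
    rw [e, h2R, two_nsmul]; exact hQQ
  have h8R : (8 : ℕ) • Point.some _ _ hR = 0 := by
    have e : (8 : ℕ) • Point.some _ _ hR = (2 : ℕ) • ((4 : ℕ) • Point.some _ _ hR) := by
      rw [smul_smul]; norm_num
    rw [e, h4R, two_nsmul]; exact hPP
  have h2T : (2 : ℕ) • Point.some _ _ hTpt = 0 := by rw [two_nsmul]; exact hTT
  have horder : addOrderOf (Point.some _ _ hR) = 8 := by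
    apply nat_dvd_aux
    · exact addOrderOf_dvd_of_nsmul_eq_zero h8R
    · intro hdvd
      have h0 : (4 : ℕ) • Point.some _ _ hR = 0 := addOrderOf_dvd_iff_nsmul_eq_zero.mp hdvd
      rw [h4R] at h0
      exact Point.some_ne_zero hP0 h0
  refine ⟨hR, horder, ?_⟩
  apply subgroup_embed (Point.some _ _ hR) (Point.some _ _ hTpt) horder h2T
    (Point.some_ne_zero hTpt)
  rw [h4R]
  intro h
  injection h with hx hy
  exact one_ne_zero (by linear_combination hx : (1 : K) = 0)

open Classical in
theorem order_eight_point {K : Type*} [Field K] (h2 : (2 : K) ≠ 0)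
    (c : K) (hc : GoodParam c) :
    ∃ hR : (cubicCurve (-((((c - 1 / c) / 2) ^ 2) ^ 2)) (-1) 0).Nonsingular
        ((1 - c) ^ 3 * (c + 1) / (4 * c))
        (-((c ^ 2 - 1 / c ^ 2) * ((c - 2) ^ 2 - 1 / c ^ 2) * c / 16)),
      addOrderOf (WeierstrassCurve.Affine.Point.some _ _ hR) = 8 ∧
      ∃ φ : (ZMod 8 × ZMod 2) →+ (cubicCurve (-((((c - 1 / c) / 2) ^ 2) ^ 2)) (-1) 0).Point,
        Function.Injective φ := by
  exact order_eight_point_aux h2 c hc
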